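/- Let (G, ·, Γ) be a right group module and T : G → Γ an 𝒪-group operator. Define g ·_T h := g · T(h) for g, h ∈ G, and let G_T denote G equipped with the group law g ⋆_T h := (g · T(h))h. Then (G, ·_T, G_T) is again a right group module, i.e. ·_T is a right action of the group G_T on the group G by automorphisms; moreover (id_G, T) : (G, ·_T, G_T) → (G, ·, Γ) is a morphism of right group modules (T(g ⋆_T h) = T(g)T(h)). -/

import Mathlib

/-- For a right group module `(G, ·, Γ)` and an 𝒪-group operator `T`,
setting `g ·_T h := g · T h` and letting `G_T` be `G` with the group law
`g ⋆_T h := (g · T h) h`, the triple `(G, ·_T, G_T)` is again a right group module,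
and `(id_G, T)` is a morphism of right group modules, i.e. `T (g ⋆_T h) = T g * T h`. -/
theorem OGroup_operator_adjacent_module
    {G Γ : Type*} [Group G] [Group Γ]
    (act : G → Γ → G)
    (hmul : ∀ (x y : G) (a : Γ), act (x * y) a = act x a * act y a)
    (hcomp : ∀ (x : G) (a b : Γ), act (act x a) b = act x (a * b))
    (hone : ∀ x : G, act x 1 = x)
    (T : G → Γ)
    (hT : ∀ g h : G, T g * T h = T (act g (T h) * h)) :
    -- `·_T` is by automorphisms: `(x y) ·_T k = (x ·_T k)(y ·_T k)`
    (∀ x y k : G, act (x * y) (T k) = act x (T k) * act y (T k)) ∧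
    -- `·_T` is a right action of the group `G_T`:
    -- `(x ·_T h) ·_T k = x ·_T (h ⋆_T k)`
    (∀ x h k : G, act (act x (T h)) (T k) = act x (T (act h (T k) * k))) ∧
    -- and `x ·_T 1 = x`
    (∀ x : G, act x (T 1) = x) ∧
    -- `(id_G, T)` is a morphism of right group modules:
    -- `T` is a group morphism from `G_T` to `Γ`
    (∀ g h : G, T (act g (T h) * h) = T g * T h) := by
  have hact1 : ∀ a : Γ, act 1 a = 1 := by
    intro a
    have := hmul 1 1 a
    simp at this
    exact this
  have hT1 : T 1 = 1 := by
    have := hT 1 1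
    rw [hact1, one_mul] at this
    exact right_eq_mul.mp this.symm
  refine ⟨fun x y k => hmul x y (T k), fun x h k => ?_, fun x => by rw [hT1, hone],
    fun g h => (hT g h).symm⟩
  rw [hcomp, hT]
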